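/- Let P ∈ H_m(ℝ^n) and Q ∈ H_k(ℝ^n) be harmonic homogeneous polynomials. Then for every ℓ ≥ 0, Δ^ℓ(P·Q) = 2^ℓ Σ_{|α|=ℓ} (∂^α P)(∂^α Q), where the sum is over multi-indices α of total order ℓ. In particular Δ^ℓ(P·Q) = 0 for ℓ ≥ min(m,k)+1. -/

import Mathlib

noncomputable section

/-- The Euclidean Laplacian on polynomials. -/
def Lap {n : ℕ} (P : MvPolynomial (Fin n) ℝ) : MvPolynomial (Fin n) ℝ :=
  ∑ i : Fin n, MvPolynomial.pderiv i (MvPolynomial.pderiv i P)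

/-- Iterated partial derivative along a sequence `s` of coordinate directions
(`∂^α` where the multi-index `α` records the multiplicities of `s`). -/
def dseq {n ℓ : ℕ} (s : Fin ℓ → Fin n) (P : MvPolynomial (Fin n) ℝ) :
    MvPolynomial (Fin n) ℝ :=
  (List.ofFn s).foldr (fun i Q => MvPolynomial.pderiv i Q) P


open MvPolynomial in
lemma pderiv_comm' {n : ℕ} (i j : Fin n) (P : MvPolynomial (Fin n) ℝ) :
    pderiv i (pderiv j P) = pderiv j (pderiv i P) := by
  induction P using MvPolynomial.induction_on' with
  | add p q hp hq => simp [hp, hq]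
  | monomial s a =>
    rcases eq_or_ne i j with rfl | hij
    · rfl
    · simp only [pderiv_monomial]
      rw [Finsupp.tsub_apply, Finsupp.tsub_apply, Finsupp.single_apply, Finsupp.single_apply]
      simp only [hij, hij.symm, if_false, tsub_zero]
      rw [tsub_right_comm]
      ring_nf

open MvPolynomial in
lemma Lap_pderiv {n : ℕ} (i : Fin n) (P : MvPolynomial (Fin n) ℝ) :
    Lap (pderiv i P) = pderiv i (Lap P) := by
  simp only [Lap, map_sum]
  exact Finset.sum_congr rfl fun j _ => by rw [pderiv_comm' j i P, pderiv_comm' j i ((pderiv j) P)]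

open MvPolynomial in
lemma dseq_cons {n ℓ : ℕ} (i : Fin n) (t : Fin ℓ → Fin n) (P : MvPolynomial (Fin n) ℝ) :
    dseq (Fin.cons i t) P = pderiv i (dseq t P) := by
  simp [dseq, List.ofFn_succ, Fin.cons_zero, Fin.cons_succ]

lemma dseq_zero {n : ℕ} (s : Fin 0 → Fin n) (P : MvPolynomial (Fin n) ℝ) : dseq s P = P := rfl

open MvPolynomial in
lemma Lap_dseq {n ℓ : ℕ} (s : Fin ℓ → Fin n) (P : MvPolynomial (Fin n) ℝ) :
    Lap (dseq s P) = dseq s (Lap P) := by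
  induction ℓ with
  | zero => rfl
  | succ ℓ ih =>
    rw [← Fin.cons_self_tail s, dseq_cons, dseq_cons, Lap_pderiv, ih]

open MvPolynomial in
lemma dseq_zero_poly {n ℓ : ℕ} (s : Fin ℓ → Fin n) :
    dseq s (0 : MvPolynomial (Fin n) ℝ) = 0 := by
  induction ℓ with
  | zero => rfl
  | succ ℓ ih => rw [← Fin.cons_self_tail s, dseq_cons, ih, map_zero]

open MvPolynomial in
lemma pderiv_isHomogeneous {n m : ℕ} (i : Fin n) {P : MvPolynomial (Fin n) ℝ}
    (h : P.IsHomogeneous m) : (pderiv i P).IsHomogeneous (m - 1) := by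
  rw [P.as_sum, map_sum]
  apply MvPolynomial.IsHomogeneous.sum
  intro v hv
  rw [pderiv_monomial]
  rcases Nat.eq_zero_or_pos (v i) with h0 | h0
  · rw [h0]
    simp only [Nat.cast_zero, mul_zero, MvPolynomial.monomial_zero]
    exact MvPolynomial.isHomogeneous_zero _ _ _
  · apply MvPolynomial.isHomogeneous_monomial
    have hd : v.degree = m := by
      rw [Finsupp.degree_eq_weight_one]; exact h (MvPolynomial.mem_support_iff.mp hv)
    have hle : Finsupp.single i 1 ≤ v := Finsupp.single_le_iff.mpr h0
    have hv' : (v - Finsupp.single i 1) + Finsupp.single i 1 = v := tsub_add_cancel_of_le hle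
    have : (v - Finsupp.single i 1).degree + (Finsupp.single i 1).degree = m := by
      rw [← hd, ← hv']
      simp [Finsupp.degree_eq_weight_one, map_add]
    have h1 : (Finsupp.single i (1:ℕ)).degree = 1 := by
      rw [Finsupp.degree_single]
    omega

open MvPolynomial in
lemma pderiv_eq_zero_of_isHomogeneous_zero {n : ℕ} (i : Fin n) {P : MvPolynomial (Fin n) ℝ}
    (h : P.IsHomogeneous 0) : pderiv i P = 0 := by
  rw [P.as_sum, map_sum]
  apply Finset.sum_eq_zero
  intro v hv
  have hd : v.degree = 0 := by
    rw [Finsupp.degree_eq_weight_one]; exact h (MvPolynomial.mem_support_iff.mp hv)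
  rw [Finsupp.degree_eq_zero_iff] at hd
  subst hd
  simp [pderiv_monomial]

open MvPolynomial in
lemma dseq_isHomogeneous {n m ℓ : ℕ} (s : Fin ℓ → Fin n) {P : MvPolynomial (Fin n) ℝ}
    (h : P.IsHomogeneous m) : (dseq s P).IsHomogeneous (m - ℓ) := by
  induction ℓ with
  | zero => simpa [dseq_zero] using h
  | succ ℓ ih =>
    rw [← Fin.cons_self_tail s, dseq_cons]
    have := pderiv_isHomogeneous (s 0) (ih (Fin.tail s))
    rwa [show m - ℓ - 1 = m - (ℓ + 1) from by omega] at this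

open MvPolynomial in
lemma dseq_eq_zero {n m ℓ : ℕ} (s : Fin ℓ → Fin n) {P : MvPolynomial (Fin n) ℝ}
    (h : P.IsHomogeneous m) (hm : m < ℓ) : dseq s P = 0 := by
  obtain ⟨j, rfl⟩ : ∃ j, ℓ = j + 1 := ⟨ℓ - 1, by omega⟩
  rw [← Fin.cons_self_tail s, dseq_cons]
  have h0 : (dseq (Fin.tail s) P).IsHomogeneous 0 := by
    have := dseq_isHomogeneous (Fin.tail s) h
    rwa [Nat.sub_eq_zero_of_le (by omega)] at this
  exact pderiv_eq_zero_of_isHomogeneous_zero _ h0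

open MvPolynomial in
lemma Lap_mul {n : ℕ} (A B : MvPolynomial (Fin n) ℝ) :
    Lap (A * B) = Lap A * B + A * Lap B + 2 * ∑ i : Fin n, pderiv i A * pderiv i B := by
  have key : ∀ i : Fin n, pderiv i (pderiv i (A * B)) =
      pderiv i (pderiv i A) * B + A * pderiv i (pderiv i B) +
        2 * (pderiv i A * pderiv i B) := by
    intro i
    rw [pderiv_mul, map_add, pderiv_mul, pderiv_mul]
    ring
  rw [Lap]
  simp only [key]
  rw [Finset.sum_add_distrib, Finset.sum_add_distrib, ← Finset.sum_mul, ← Finset.mul_sum,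
    ← Finset.mul_sum]
  rfl

lemma Lap_smul {n : ℕ} (c : ℝ) (A : MvPolynomial (Fin n) ℝ) : Lap (c • A) = c • Lap A := by
  simp [Lap, Finset.smul_sum]

lemma Lap_sum {n : ℕ} {α : Type*} (t : Finset α) (f : α → MvPolynomial (Fin n) ℝ) :
    Lap (∑ a ∈ t, f a) = ∑ a ∈ t, Lap (f a) := by
  simp [Lap, map_sum]
  rw [Finset.sum_comm]

/-- For harmonic homogeneous polynomials `P ∈ H_m`, `Q ∈ H_k`:
`Δ^ℓ (P·Q) = 2^ℓ Σ_{|α|=ℓ} ∂^α P · ∂^α Q` (the sum over multi-indices with multiplicity,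
i.e. over sequences of `ℓ` coordinate directions); in particular `Δ^ℓ (P·Q) = 0` for
`ℓ ≥ min(m,k) + 1`. -/
theorem xray_stmt11 {n m k : ℕ} (P Q : MvPolynomial (Fin n) ℝ)
    (hP : Lap P = 0) (hPm : P.IsHomogeneous m)
    (hQ : Lap Q = 0) (hQk : Q.IsHomogeneous k) :
    (∀ ℓ : ℕ, Lap^[ℓ] (P * Q) = (2 : ℝ) ^ ℓ • ∑ s : Fin ℓ → Fin n, dseq s P * dseq s Q) ∧
    (∀ ℓ : ℕ, min m k + 1 ≤ ℓ → Lap^[ℓ] (P * Q) = 0) := by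
  have main : ∀ ℓ : ℕ,
      Lap^[ℓ] (P * Q) = (2 : ℝ) ^ ℓ • ∑ s : Fin ℓ → Fin n, dseq s P * dseq s Q := by
    intro ℓ
    induction ℓ with
    | zero =>
      simp only [Function.iterate_zero_apply, pow_zero, one_smul]
      rw [Finset.univ_unique, Finset.sum_singleton]
      rfl
    | succ ℓ ih =>
      rw [Function.iterate_succ_apply', ih, Lap_smul, Lap_sum]
      have step : ∀ t : Fin ℓ → Fin n, Lap (dseq t P * dseq t Q) =
          2 * ∑ i : Fin n, MvPolynomial.pderiv i (dseq t P) * MvPolynomial.pderiv i (dseq t Q) := by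
        intro t
        rw [Lap_mul, Lap_dseq, Lap_dseq, hP, hQ, dseq_zero_poly]
        ring
      simp only [step]
      rw [← Finset.mul_sum]
      have hre : ∑ s : Fin (ℓ+1) → Fin n, dseq s P * dseq s Q
          = ∑ t : Fin ℓ → Fin n, ∑ i : Fin n,
              MvPolynomial.pderiv i (dseq t P) * MvPolynomial.pderiv i (dseq t Q) := by
        have he := Fintype.sum_equiv (Fin.consEquiv fun _ : Fin (ℓ+1) => Fin n)
          (fun p : Fin n × (Fin ℓ → Fin n) =>
            MvPolynomial.pderiv p.1 (dseq p.2 P) * MvPolynomial.pderiv p.1 (dseq p.2 Q))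
          (fun s => dseq s P * dseq s Q)
          (fun p => by rcases p with ⟨i, t⟩; simp [Fin.consEquiv, dseq_cons])
        rw [← he, Fintype.sum_prod_type, Finset.sum_comm]
      rw [hre, pow_succ, mul_smul]
      congr 1
      rw [two_smul, two_mul]
  refine ⟨main, fun ℓ hℓ => ?_⟩
  rw [main ℓ]
  have hz : ∑ s : Fin ℓ → Fin n, dseq s P * dseq s Q = 0 := by
    apply Finset.sum_eq_zero
    intro s _
    rcases le_total m k with hmk | hmk
    · rw [dseq_eq_zero s hPm (by omega), zero_mul]
    · rw [dseq_eq_zero s hQk (by omega), mul_zero]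
  rw [hz, smul_zero]
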